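/- arXiv:1808.05550 — 3 statements merged into one kernel-verified Lean document; each statement's English description precedes it below -/
import Mathlib

section
/- Let n ≥ 1 and 1 ≤ k ≤ n. The function A ↦ (trace_k[A])^(1/k) is concave on the convex cone of n×n Hermitian positive semi-definite matrices; that is, for all Hermitian positive semi-definite A, B and τ ∈ [0,1], (trace_k[τA+(1−τ)B])^(1/k) ≥ τ·(trace_k[A])^(1/k) + (1−τ)·(trace_k[B])^(1/k). -/
open Matrix MeasureTheory Finset ProbabilityTheory
open scoped Classical ComplexOrder

noncomputable section

/-- `kTraceC k A` is the `k`-trace of `A`: the sum of all `k × k` principal minors of `A`,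
equivalently the `k`-th elementary symmetric polynomial of the eigenvalues of `A`. -/
def kTraceC {n : ℕ} (k : ℕ) (A : Matrix (Fin n) (Fin n) ℂ) : ℂ :=
  ∑ s ∈ (Finset.univ : Finset (Fin n)).powersetCard k,
    (A.submatrix (fun i : {x // x ∈ s} => (i : Fin n)) (fun j : {x // x ∈ s} => (j : Fin n))).det

/-- The real value of the `k`-trace (which is real for Hermitian matrices). -/
def kTrace {n : ℕ} (k : ℕ) (A : Matrix (Fin n) (Fin n) ℂ) : ℝ := (kTraceC k A).re

end

namespace KTraceAux

set_option linter.unusedSectionVars false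

variable {ι : Type*} [DecidableEq ι]

/-- Elementary symmetric function of `x` over the index finset `s`. -/
def esym (s : Finset ι) (k : ℕ) (x : ι → ℝ) : ℝ :=
  ∑ T ∈ s.powersetCard k, ∏ i ∈ T, x i

lemma esym_zero (s : Finset ι) (x : ι → ℝ) : esym s 0 x = 1 := by
  simp [esym]

lemma esym_one (s : Finset ι) (x : ι → ℝ) : esym s 1 x = ∑ i ∈ s, x i := by
  classical
  unfold esym
  rw [Finset.powersetCard_one]
  rw [Finset.sum_map]
  simp

lemma esym_nonneg {s : Finset ι} {x : ι → ℝ} (hx : ∀ i ∈ s, 0 ≤ x i) (k : ℕ) :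
    0 ≤ esym s k x := by
  apply Finset.sum_nonneg
  intro T hT
  rw [Finset.mem_powersetCard] at hT
  exact Finset.prod_nonneg fun i hi => hx i (hT.1 hi)

lemma esym_pos {s : Finset ι} {x : ι → ℝ} (hx : ∀ i ∈ s, 0 < x i) {k : ℕ}
    (hk : k ≤ s.card) : 0 < esym s k x := by
  apply Finset.sum_pos
  · intro T hT
    rw [Finset.mem_powersetCard] at hT
    exact Finset.prod_pos fun i hi => hx i (hT.1 hi)
  · exact Finset.powersetCard_nonempty.2 hk

lemma esym_mono {s : Finset ι} {x y : ι → ℝ} (hx : ∀ i ∈ s, 0 ≤ x i)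
    (h : ∀ i ∈ s, x i ≤ y i) (k : ℕ) : esym s k x ≤ esym s k y := by
  apply Finset.sum_le_sum
  intro T hT
  rw [Finset.mem_powersetCard] at hT
  exact Finset.prod_le_prod (fun i hi => hx i (hT.1 hi)) (fun i hi => h i (hT.1 hi))

lemma esym_smul (s : Finset ι) (k : ℕ) (c : ℝ) (x : ι → ℝ) :
    esym s k (fun i => c * x i) = c ^ k * esym s k x := by
  unfold esym
  rw [Finset.mul_sum]
  apply Finset.sum_congr rfl
  intro T hT
  rw [Finset.mem_powersetCard] at hT
  rw [Finset.prod_mul_distrib, Finset.prod_const, hT.2]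

/-- Deletion identity: `E_{k+1}(s) = E_{k+1}(s∖i) + xᵢ E_k(s∖i)`. -/
lemma esym_erase {s : Finset ι} {i : ι} (hi : i ∈ s) (k : ℕ) (x : ι → ℝ) :
    esym s (k + 1) x = esym (s.erase i) (k + 1) x + x i * esym (s.erase i) k x := by
  classical
  unfold esym
  conv_lhs => rw [← Finset.insert_erase hi]
  rw [Finset.powersetCard_succ_insert (Finset.notMem_erase i s)]
  rw [Finset.sum_union]
  · congr 1
    rw [Finset.sum_image, Finset.mul_sum]
    · apply Finset.sum_congr rfl
      intro T hT
      rw [Finset.mem_powersetCard] at hT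
      have hiT : i ∉ T := fun h => Finset.notMem_erase i s (hT.1 h)
      rw [Finset.prod_insert hiT]
    · intro T hT T' hT' h
      rw [Finset.mem_coe, Finset.mem_powersetCard] at hT hT'
      have hiT : i ∉ T := fun hh => Finset.notMem_erase i s (hT.1 hh)
      have hiT' : i ∉ T' := fun hh => Finset.notMem_erase i s (hT'.1 hh)
      have := congrArg (Finset.erase · i) h
      simpa [Finset.erase_insert hiT, Finset.erase_insert hiT'] using this
  · rw [Finset.disjoint_left]
    intro T hT hT'
    rw [Finset.mem_powersetCard] at hT
    have hiT : i ∉ T := fun h => Finset.notMem_erase i s (hT.1 h)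
    rw [Finset.mem_image] at hT'
    obtain ⟨T', _, rfl⟩ := hT'
    exact hiT (Finset.mem_insert_self i T')

/-- Double counting: `(k+1)·E_{k+1}(s) = ∑_{i∈s} xᵢ E_k(s∖i)`. -/
lemma succ_mul_esym (s : Finset ι) (k : ℕ) (x : ι → ℝ) :
    ((k : ℝ) + 1) * esym s (k + 1) x = ∑ i ∈ s, x i * esym (s.erase i) k x := by
  classical
  have lhs_eq : ∑ T ∈ s.powersetCard (k + 1), ∑ i ∈ T, x i * ∏ j ∈ T.erase i, x j
      = ((k : ℝ) + 1) * esym s (k + 1) x := by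
    unfold esym
    rw [Finset.mul_sum]
    apply Finset.sum_congr rfl
    intro T hT
    rw [Finset.mem_powersetCard] at hT
    have h1 : ∀ i ∈ T, x i * ∏ j ∈ T.erase i, x j = ∏ j ∈ T, x j := by
      intro i hi
      exact Finset.mul_prod_erase T x hi
    rw [Finset.sum_congr rfl h1, Finset.sum_const, hT.2]
    push_cast
    ring
  rw [← lhs_eq]
  unfold esym
  simp_rw [Finset.mul_sum]
  rw [Finset.sum_sigma', Finset.sum_sigma']
  apply Finset.sum_nbij' (i := fun p => (⟨p.2, p.1.erase p.2⟩ : Σ _ : ι, Finset ι))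
    (j := fun q => (⟨insert q.1 q.2, q.1⟩ : Σ _ : Finset ι, ι))
  · rintro ⟨T, i⟩ h
    simp only [Finset.mem_sigma, Finset.mem_powersetCard] at h ⊢
    obtain ⟨hT, hi⟩ := h
    refine ⟨hT.1 hi, ?_, ?_⟩
    · exact Finset.erase_subset_erase i hT.1
    · rw [Finset.card_erase_of_mem hi, hT.2]; omega
  · rintro ⟨i, T⟩ h
    simp only [Finset.mem_sigma, Finset.mem_powersetCard] at h ⊢
    obtain ⟨hi, hT⟩ := h
    refine ⟨⟨Finset.insert_subset hi (hT.1.trans (Finset.erase_subset i s)), ?_⟩,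
      Finset.mem_insert_self _ _⟩
    rw [Finset.card_insert_of_notMem (fun hh => Finset.notMem_erase i s (hT.1 hh)), hT.2]
  · rintro ⟨T, i⟩ h
    simp only [Finset.mem_sigma, Finset.mem_powersetCard] at h
    obtain ⟨hT, hi⟩ := h
    simp [Finset.insert_erase hi]
  · rintro ⟨i, T⟩ h
    simp only [Finset.mem_sigma, Finset.mem_powersetCard] at h
    obtain ⟨hi, hT⟩ := h
    have hiT : i ∉ T := fun hh => Finset.notMem_erase i s (hT.1 hh)
    simp [Finset.erase_insert hiT]
  · rintro ⟨T, i⟩ h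
    simp only [Finset.mem_sigma, Finset.mem_powersetCard] at h
    rfl


lemma sq_div_add {u v p q : ℝ} (hp : 0 < p) (hq : 0 < q) :
    (u + v) ^ 2 / (p + q) ≤ u ^ 2 / p + v ^ 2 / q := by
  rw [div_add_div _ _ hp.ne' hq.ne', div_le_div_iff₀ (by positivity) (by positivity)]
  nlinarith [sq_nonneg (u * q - v * p), mul_pos hp hq]

lemma key_term {s : Finset ι} {x : ι → ℝ} (hx : ∀ i ∈ s, 0 < x i) {m : ℕ}
    (hms : m + 2 ≤ s.card) {i : ι} (hi : i ∈ s) :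
    x i * esym (s.erase i) (m + 1) x
      = (x i - x i ^ 2 / (x i + esym (s.erase i) (m + 1) x / esym (s.erase i) m x))
        * esym s (m + 1) x := by
  have hcard : m + 1 ≤ (s.erase i).card := by
    rw [Finset.card_erase_of_mem hi]; omega
  have hx' : ∀ j ∈ s.erase i, 0 < x j := fun j hj => hx j (Finset.mem_of_mem_erase hj)
  have hE0 : 0 < esym (s.erase i) m x := esym_pos hx' (by omega)
  have hE1 : 0 < esym (s.erase i) (m + 1) x := esym_pos hx' hcard
  have hxi : 0 < x i := hx i hi
  rw [esym_erase hi m x]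
  have h1 : 0 < x i + esym (s.erase i) (m + 1) x / esym (s.erase i) m x := by positivity
  field_simp
  ring

lemma ratio_formula {s : Finset ι} {x : ι → ℝ} (hx : ∀ i ∈ s, 0 < x i) {m : ℕ}
    (hms : m + 2 ≤ s.card) :
    esym s (m + 2) x / esym s (m + 1) x
      = (∑ i ∈ s, (x i - x i ^ 2
          / (x i + esym (s.erase i) (m + 1) x / esym (s.erase i) m x))) / ((m : ℝ) + 2) := by
  have h2 := succ_mul_esym s (m + 1) x
  rw [Finset.sum_congr rfl (fun i hi => key_term hx hms hi), ← Finset.sum_mul] at h2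
  have hE : 0 < esym s (m + 1) x := esym_pos hx (by omega)
  rw [div_eq_div_iff hE.ne' (by positivity : (0:ℝ) < (m : ℝ) + 2).ne']
  push_cast at h2
  linarith [h2]

theorem ratio_superadd : ∀ (k : ℕ) (s : Finset ι) (x y : ι → ℝ),
    (∀ i ∈ s, 0 < x i) → (∀ i ∈ s, 0 < y i) → k + 1 ≤ s.card →
    esym s (k + 1) x / esym s k x + esym s (k + 1) y / esym s k y
      ≤ esym s (k + 1) (fun i => x i + y i) / esym s k (fun i => x i + y i) := by
  intro k
  induction k with
  | zero =>
    intro s x y hx hy hs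
    simp only [zero_add, esym_zero, esym_one, div_one, ← Finset.sum_add_distrib]
    exact le_refl _
  | succ m ih =>
    intro s x y hx hy hs
    have hz : ∀ i ∈ s, 0 < x i + y i := fun i hi => add_pos (hx i hi) (hy i hi)
    have hs' : m + 2 ≤ s.card := hs
    rw [ratio_formula hx hs', ratio_formula hy hs',
      show (fun i => x i + y i) = (fun i => x i + y i) from rfl, ratio_formula hz hs']
    rw [← add_div]
    have h2pos : (0:ℝ) < (m : ℝ) + 2 := by positivity
    rw [div_le_div_iff_of_pos_right h2pos]
    rw [← Finset.sum_add_distrib]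
    apply Finset.sum_le_sum
    intro i hi
    have hcard : m + 1 ≤ (s.erase i).card := by rw [Finset.card_erase_of_mem hi]; omega
    have hx' : ∀ j ∈ s.erase i, 0 < x j := fun j hj => hx j (Finset.mem_of_mem_erase hj)
    have hy' : ∀ j ∈ s.erase i, 0 < y j := fun j hj => hy j (Finset.mem_of_mem_erase hj)
    set a := esym (s.erase i) (m + 1) x / esym (s.erase i) m x with ha_def
    set b := esym (s.erase i) (m + 1) y / esym (s.erase i) m y with hb_def
    set c := esym (s.erase i) (m + 1) (fun j => x j + y j)
      / esym (s.erase i) m (fun j => x j + y j) with hc_def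
    have hIH : a + b ≤ c := by
      have := ih (s.erase i) x y hx' hy' hcard
      simpa [ha_def, hb_def, hc_def] using this
    have hA : 0 < a := div_pos (esym_pos hx' hcard) (esym_pos hx' (by omega))
    have hB : 0 < b := div_pos (esym_pos hy' hcard) (esym_pos hy' (by omega))
    have hC : 0 < c := lt_of_lt_of_le (by linarith) hIH
    have hxi := hx i hi
    have hyi := hy i hi
    have step1 : (x i + y i) ^ 2 / (x i + y i + c)
        ≤ (x i + y i) ^ 2 / ((x i + a) + (y i + b)) := by
      apply div_le_div_of_nonneg_left (by positivity) (by positivity)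
      linarith
    have step2 : (x i + y i) ^ 2 / ((x i + a) + (y i + b))
        ≤ (x i) ^ 2 / (x i + a) + (y i) ^ 2 / (y i + b) :=
      sq_div_add (by positivity) (by positivity)
    linarith

lemma esym_eq_prod_ratio {s : Finset ι} {x : ι → ℝ} (hx : ∀ i ∈ s, 0 < x i) :
    ∀ k, k ≤ s.card →
      esym s k x = ∏ j ∈ Finset.range k, (esym s (j + 1) x / esym s j x) := by
  intro k
  induction k with
  | zero => simp [esym_zero]
  | succ m ih =>
    intro h
    have hE : 0 < esym s m x := esym_pos hx (by omega)
    rw [Finset.prod_range_succ, ← ih (by omega), mul_comm, div_mul_cancel₀ _ hE.ne']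

lemma mahler {k : ℕ} (hk : 1 ≤ k) {a b : ℕ → ℝ} (ha : ∀ j ∈ Finset.range k, 0 < a j)
    (hb : ∀ j ∈ Finset.range k, 0 < b j) :
    (∏ j ∈ Finset.range k, a j) ^ (1 / (k : ℝ))
      + (∏ j ∈ Finset.range k, b j) ^ (1 / (k : ℝ))
      ≤ (∏ j ∈ Finset.range k, (a j + b j)) ^ (1 / (k : ℝ)) := by
  have hk0 : (0:ℝ) < (k : ℝ) := by exact_mod_cast hk
  have hab : ∀ j ∈ Finset.range k, 0 < a j + b j :=
    fun j hj => add_pos (ha j hj) (hb j hj)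
  have hS : 0 < ∏ j ∈ Finset.range k, (a j + b j) := Finset.prod_pos hab
  have hPa : 0 < ∏ j ∈ Finset.range k, a j := Finset.prod_pos ha
  have hPb : 0 < ∏ j ∈ Finset.range k, b j := Finset.prod_pos hb
  have hw : ∀ j ∈ Finset.range k, (0:ℝ) ≤ 1 / (k : ℝ) := fun _ _ => by positivity
  have hw' : ∑ _j ∈ Finset.range k, (1:ℝ) / (k : ℝ) = 1 := by
    rw [Finset.sum_const, Finset.card_range, nsmul_eq_mul]
    field_simp
  have hA := Real.geom_mean_le_arith_mean_weighted (Finset.range k) (fun _ => 1 / (k:ℝ))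
    (fun j => a j / (a j + b j)) hw hw'
    (fun j hj => le_of_lt (div_pos (ha j hj) (hab j hj)))
  have hB := Real.geom_mean_le_arith_mean_weighted (Finset.range k) (fun _ => 1 / (k:ℝ))
    (fun j => b j / (a j + b j)) hw hw'
    (fun j hj => le_of_lt (div_pos (hb j hj) (hab j hj)))
  have prodA : ∏ j ∈ Finset.range k, (a j / (a j + b j)) ^ ((1:ℝ) / (k:ℝ))
      = (∏ j ∈ Finset.range k, a j) ^ ((1:ℝ)/(k:ℝ))
        / (∏ j ∈ Finset.range k, (a j + b j)) ^ ((1:ℝ)/(k:ℝ)) := by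
    rw [Real.finset_prod_rpow _ _ (fun j hj => le_of_lt (div_pos (ha j hj) (hab j hj))),
      Finset.prod_div_distrib, Real.div_rpow hPa.le hS.le]
  have prodB : ∏ j ∈ Finset.range k, (b j / (a j + b j)) ^ ((1:ℝ) / (k:ℝ))
      = (∏ j ∈ Finset.range k, b j) ^ ((1:ℝ)/(k:ℝ))
        / (∏ j ∈ Finset.range k, (a j + b j)) ^ ((1:ℝ)/(k:ℝ)) := by
    rw [Real.finset_prod_rpow _ _ (fun j hj => le_of_lt (div_pos (hb j hj) (hab j hj))),
      Finset.prod_div_distrib, Real.div_rpow hPb.le hS.le]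
  rw [prodA] at hA
  rw [prodB] at hB
  have hsum : ∑ j ∈ Finset.range k, ((1:ℝ)/(k:ℝ)) * (a j / (a j + b j))
      + ∑ j ∈ Finset.range k, ((1:ℝ)/(k:ℝ)) * (b j / (a j + b j)) = 1 := by
    rw [← Finset.sum_add_distrib]
    have hterm : ∀ j ∈ Finset.range k, (1/(k:ℝ)) * (a j / (a j + b j))
        + (1/(k:ℝ)) * (b j / (a j + b j)) = 1/(k:ℝ) := by
      intro j hj
      rw [← mul_add, ← add_div, div_self (hab j hj).ne', mul_one]
    rw [Finset.sum_congr rfl hterm, hw']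
  have hSr : 0 < (∏ j ∈ Finset.range k, (a j + b j)) ^ ((1:ℝ)/(k:ℝ)) :=
    Real.rpow_pos_of_pos hS _
  have hfinal : (∏ j ∈ Finset.range k, a j) ^ ((1:ℝ)/(k:ℝ))
        / (∏ j ∈ Finset.range k, (a j + b j)) ^ ((1:ℝ)/(k:ℝ))
      + (∏ j ∈ Finset.range k, b j) ^ ((1:ℝ)/(k:ℝ))
        / (∏ j ∈ Finset.range k, (a j + b j)) ^ ((1:ℝ)/(k:ℝ)) ≤ 1 := by
    calc _ ≤ _ := add_le_add hA hB
    _ = 1 := hsum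
  rw [← add_div, div_le_one hSr] at hfinal
  exact hfinal

theorem esym_rpow_superadd {s : Finset ι} {k : ℕ} (hk : 1 ≤ k) (hks : k ≤ s.card)
    {x y : ι → ℝ} (hx : ∀ i ∈ s, 0 < x i) (hy : ∀ i ∈ s, 0 < y i) :
    esym s k x ^ (1 / (k : ℝ)) + esym s k y ^ (1 / (k : ℝ))
      ≤ esym s k (fun i => x i + y i) ^ (1 / (k : ℝ)) := by
  have hz : ∀ i ∈ s, 0 < x i + y i := fun i hi => add_pos (hx i hi) (hy i hi)
  set a : ℕ → ℝ := fun j => esym s (j + 1) x / esym s j x with ha_def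
  set b : ℕ → ℝ := fun j => esym s (j + 1) y / esym s j y with hb_def
  set c : ℕ → ℝ := fun j => esym s (j + 1) (fun i => x i + y i)
    / esym s j (fun i => x i + y i) with hc_def
  have haj : ∀ j ∈ Finset.range k, 0 < a j := fun j hj => by
    have := Finset.mem_range.1 hj
    exact div_pos (esym_pos hx (by omega)) (esym_pos hx (by omega))
  have hbj : ∀ j ∈ Finset.range k, 0 < b j := fun j hj => by
    have := Finset.mem_range.1 hj
    exact div_pos (esym_pos hy (by omega)) (esym_pos hy (by omega))
  have hcj : ∀ j ∈ Finset.range k, a j + b j ≤ c j := fun j hj => by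
    have := Finset.mem_range.1 hj
    exact ratio_superadd j s x y hx hy (by omega)
  have habj : ∀ j ∈ Finset.range k, 0 < a j + b j :=
    fun j hj => add_pos (haj j hj) (hbj j hj)
  rw [esym_eq_prod_ratio hx k hks, esym_eq_prod_ratio hy k hks,
    esym_eq_prod_ratio hz k hks]
  calc (∏ j ∈ Finset.range k, a j) ^ (1 / (k : ℝ))
        + (∏ j ∈ Finset.range k, b j) ^ (1 / (k : ℝ))
      ≤ (∏ j ∈ Finset.range k, (a j + b j)) ^ (1 / (k : ℝ)) := mahler hk haj hbj
    _ ≤ (∏ j ∈ Finset.range k, c j) ^ (1 / (k : ℝ)) := by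
        apply Real.rpow_le_rpow (Finset.prod_nonneg fun j hj => (habj j hj).le)
          (Finset.prod_le_prod (fun j hj => (habj j hj).le) hcj) (by positivity)

theorem esym_rpow_superadd' {s : Finset ι} {k : ℕ} (hk : 1 ≤ k) (hks : k ≤ s.card)
    {x y : ι → ℝ} (hx : ∀ i ∈ s, 0 ≤ x i) (hy : ∀ i ∈ s, 0 ≤ y i) :
    esym s k x ^ (1 / (k : ℝ)) + esym s k y ^ (1 / (k : ℝ))
      ≤ esym s k (fun i => x i + y i) ^ (1 / (k : ℝ)) := by
  have hkR : (0:ℝ) < 1 / (k : ℝ) := by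
    have : (0:ℝ) < (k:ℝ) := by exact_mod_cast hk
    positivity
  -- the function of ε
  have key : ∀ ε : ℝ, 0 < ε →
      esym s k x ^ (1 / (k : ℝ)) + esym s k y ^ (1 / (k : ℝ))
        ≤ esym s k (fun i => x i + y i + 2 * ε) ^ (1 / (k : ℝ)) := by
    intro ε hε
    have hx' : ∀ i ∈ s, 0 < x i + ε := fun i hi => by have := hx i hi; linarith
    have hy' : ∀ i ∈ s, 0 < y i + ε := fun i hi => by have := hy i hi; linarith
    have h1 : esym s k x ≤ esym s k (fun i => x i + ε) :=
      esym_mono hx (fun i hi => by linarith) k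
    have h2 : esym s k y ≤ esym s k (fun i => y i + ε) :=
      esym_mono hy (fun i hi => by linarith) k
    have h3 := esym_rpow_superadd hk hks hx' hy'
    have e1 : esym s k x ^ (1 / (k : ℝ)) ≤ esym s k (fun i => x i + ε) ^ (1 / (k : ℝ)) :=
      Real.rpow_le_rpow (esym_nonneg hx k) h1 hkR.le
    have e2 : esym s k y ^ (1 / (k : ℝ)) ≤ esym s k (fun i => y i + ε) ^ (1 / (k : ℝ)) :=
      Real.rpow_le_rpow (esym_nonneg hy k) h2 hkR.le
    have heq : (fun i => (x i + ε) + (y i + ε)) = fun i => x i + y i + 2 * ε := by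
      funext i; ring
    rw [heq] at h3
    linarith
  -- pass to the limit ε → 0⁺
  have hcont : Continuous fun ε : ℝ => esym s k (fun i => x i + y i + 2 * ε) := by
    unfold esym
    apply continuous_finset_sum
    intro T _
    apply continuous_finset_prod
    intro i _
    fun_prop
  have hcont2 : ContinuousAt
      (fun ε : ℝ => esym s k (fun i => x i + y i + 2 * ε) ^ (1 / (k : ℝ))) 0 := by
    apply ContinuousAt.rpow_const hcont.continuousAt
    right; exact hkR.le
  have hlim : Filter.Tendsto
      (fun ε : ℝ => esym s k (fun i => x i + y i + 2 * ε) ^ (1 / (k : ℝ)))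
      (nhdsWithin 0 (Set.Ioi 0))
      (nhds (esym s k (fun i => x i + y i + 2 * 0) ^ (1 / (k : ℝ)))) :=
    (hcont2.tendsto).mono_left nhdsWithin_le_nhds
  have heq0 : (fun i => x i + y i + 2 * (0:ℝ)) = fun i => x i + y i := by
    funext i; ring
  rw [heq0] at hlim
  apply ge_of_tendsto hlim
  filter_upwards [self_mem_nhdsWithin] with ε hε
  exact key ε hε

theorem esym_rpow_concave {s : Finset ι} {k : ℕ} (hk : 1 ≤ k) (hks : k ≤ s.card)
    {x y : ι → ℝ} (hx : ∀ i ∈ s, 0 ≤ x i) (hy : ∀ i ∈ s, 0 ≤ y i)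
    {τ : ℝ} (hτ0 : 0 ≤ τ) (hτ1 : τ ≤ 1) :
    τ * esym s k x ^ (1 / (k : ℝ)) + (1 - τ) * esym s k y ^ (1 / (k : ℝ))
      ≤ esym s k (fun i => τ * x i + (1 - τ) * y i) ^ (1 / (k : ℝ)) := by
  have hk0 : k ≠ 0 := by omega
  have hx' : ∀ i ∈ s, 0 ≤ τ * x i := fun i hi => mul_nonneg hτ0 (hx i hi)
  have hy' : ∀ i ∈ s, 0 ≤ (1 - τ) * y i := fun i hi => mul_nonneg (by linarith) (hy i hi)
  have h := esym_rpow_superadd' hk hks hx' hy'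
  have ex : esym s k (fun i => τ * x i) ^ (1 / (k : ℝ)) = τ * esym s k x ^ (1 / (k : ℝ)) := by
    rw [esym_smul, Real.mul_rpow (pow_nonneg hτ0 k) (esym_nonneg hx k), one_div,
      Real.pow_rpow_inv_natCast hτ0 hk0]
  have ey : esym s k (fun i => (1 - τ) * y i) ^ (1 / (k : ℝ))
      = (1 - τ) * esym s k y ^ (1 / (k : ℝ)) := by
    rw [esym_smul, Real.mul_rpow (pow_nonneg (by linarith : (0:ℝ) ≤ 1 - τ) k) (esym_nonneg hy k), one_div,
      Real.pow_rpow_inv_natCast (by linarith) hk0]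
  rw [ex, ey] at h
  exact h

end KTraceAux


namespace KTraceAux2

set_option linter.unusedSectionVars false
set_option maxHeartbeats 800000

variable {R : Type*} [CommRing R] {N : Type*} [Fintype N] [DecidableEq N]

/-- Expansion of `det (1 + A)` as a sum of principal minors. -/
lemma det_one_add_expand (A : Matrix N N R) :
    (1 + A).det = ∑ S ∈ (Finset.univ : Finset N).powerset,
      (A.submatrix (fun i : {x // x ∈ S} => (i : N)) (fun j : {x // x ∈ S} => (j : N))).det := by
  classical
  rw [Matrix.det_apply]
  have expand : ∀ σ : Equiv.Perm N, ∏ i, (1 + A) (σ i) i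
      = ∑ S ∈ (Finset.univ : Finset N).powerset,
          (∏ i ∈ S, A (σ i) i) * ∏ i ∈ Finset.univ \ S, (1 : Matrix N N R) (σ i) i := by
    intro σ
    rw [← Finset.prod_add]
    apply Finset.prod_congr rfl
    intro i _
    rw [Matrix.add_apply]
    ring
  simp_rw [expand, Finset.smul_sum]
  rw [Finset.sum_comm]
  apply Finset.sum_congr rfl
  intro S _
  rw [Matrix.det_apply]
  have hzero : ∀ σ : Equiv.Perm N, ¬ (∀ i ∉ S, σ i = i)
      → (Equiv.Perm.sign σ) • ((∏ i ∈ S, A (σ i) i) * ∏ i ∈ Finset.univ \ S,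
          (1 : Matrix N N R) (σ i) i) = 0 := by
    intro σ hσ
    simp only [not_forall] at hσ
    obtain ⟨i, hiS, hne⟩ := hσ
    have h1 : (1 : Matrix N N R) (σ i) i = 0 := Matrix.one_apply_ne hne
    have h2 : ∏ i ∈ Finset.univ \ S, (1 : Matrix N N R) (σ i) i = 0 :=
      Finset.prod_eq_zero (Finset.mem_sdiff.2 ⟨Finset.mem_univ i, hiS⟩) h1
    rw [h2]
    simp
  rw [← Finset.sum_filter_of_ne (fun σ _ h => by
    by_contra hc
    exact h (hzero σ hc))]
  symm
  apply Finset.sum_bij (i := fun (π : Equiv.Perm {x // x ∈ S}) _ => Equiv.Perm.ofSubtype π)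
  · intro π _
    simp only [Finset.mem_filter, Finset.mem_univ, true_and]
    intro i hiS
    exact Equiv.Perm.ofSubtype_apply_of_not_mem π hiS
  · intro π₁ _ π₂ _ h
    ext j
    have h2 : (Equiv.Perm.ofSubtype π₁) (j : N) = (Equiv.Perm.ofSubtype π₂) (j : N) := by
      rw [h]
    rw [Equiv.Perm.ofSubtype_apply_coe, Equiv.Perm.ofSubtype_apply_coe] at h2
    exact congrArg Subtype.val (Subtype.ext h2)
  · intro σ hσ
    simp only [Finset.mem_filter, Finset.mem_univ, true_and] at hσ
    have hmem : ∀ a : N, a ∈ S ↔ σ a ∈ S := by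
      intro a
      constructor
      · intro ha
        by_contra hb
        have h1 : σ (σ a) = σ a := hσ _ hb
        have h2 : σ a = a := σ.injective h1
        rw [h2] at hb
        exact hb ha
      · intro ha
        by_contra hb
        rw [hσ a hb] at ha
        exact hb ha
    refine ⟨σ.subtypePerm (fun a => (hmem a).symm), Finset.mem_univ _, ?_⟩
    ext i
    by_cases hi : i ∈ S
    · rw [Equiv.Perm.ofSubtype_apply_of_mem _ hi]
      rfl
    · rw [Equiv.Perm.ofSubtype_apply_of_not_mem _ hi, hσ i hi]
  · intro π _
    have hsign : Equiv.Perm.sign (Equiv.Perm.ofSubtype π) = Equiv.Perm.sign π := by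
      have h := Equiv.Perm.sign_ofSubtype π
      exact h
    have hone : ∏ i ∈ Finset.univ \ S, (1 : Matrix N N R) ((Equiv.Perm.ofSubtype π) i) i = 1 := by
      apply Finset.prod_eq_one
      intro i hi
      rw [Equiv.Perm.ofSubtype_apply_of_not_mem π (Finset.mem_sdiff.1 hi).2]
      exact Matrix.one_apply_eq i
    have hprod : ∏ i ∈ S, A ((Equiv.Perm.ofSubtype π) i) i
        = ∏ j : {x // x ∈ S}, (A.submatrix (fun i : {x // x ∈ S} => (i : N))
            (fun j : {x // x ∈ S} => (j : N))) (π j) j := by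
      rw [← Finset.prod_coe_sort]
      apply Finset.prod_congr rfl
      intro j _
      rw [Matrix.submatrix_apply]
      congr 1
      rw [Equiv.Perm.ofSubtype_apply_of_mem π j.2]
    rw [hsign, hone, hprod, mul_one]

/-- `kTraceC k M` is the `k`-th coefficient of `det (1 + X • M)`. -/
lemma kTraceC_eq_coeff {n : ℕ} (k : ℕ) (M : Matrix (Fin n) (Fin n) ℂ) :
    kTraceC k M = (Matrix.det ((1 : Matrix (Fin n) (Fin n) (Polynomial ℂ))
      + (Polynomial.X : Polynomial ℂ) • M.map Polynomial.C)).coeff k := by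
  rw [det_one_add_expand, Polynomial.finset_sum_coeff]
  unfold kTraceC
  rw [Finset.powersetCard_eq_filter, Finset.sum_filter]
  apply Finset.sum_congr rfl
  intro S _
  simp only [Matrix.submatrix_smul, Pi.smul_apply, Matrix.submatrix_map]
  rw [Matrix.det_smul, ← RingHom.mapMatrix_apply, ← RingHom.map_det, Fintype.card_coe, mul_comm,
    Polynomial.coeff_C_mul, Polynomial.coeff_X_pow]
  by_cases h : S.card = k
  · simp [h]
  · simp only [h, if_false]
    rw [if_neg (fun hh => h hh.symm), mul_zero]

/-- `kTraceC` is invariant under conjugation. -/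
lemma kTraceC_conj {n : ℕ} (k : ℕ) (M U V : Matrix (Fin n) (Fin n) ℂ)
    (hUV : U * V = 1) (hVU : V * U = 1) :
    kTraceC k (U * M * V) = kTraceC k M := by
  rw [kTraceC_eq_coeff, kTraceC_eq_coeff]
  congr 1
  have key : (1 : Matrix (Fin n) (Fin n) (Polynomial ℂ))
      + (Polynomial.X : Polynomial ℂ) • (U * M * V).map Polynomial.C
      = U.map Polynomial.C * ((1 : Matrix (Fin n) (Fin n) (Polynomial ℂ))
          + (Polynomial.X : Polynomial ℂ) • M.map Polynomial.C) * V.map Polynomial.C := by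
    rw [Matrix.mul_add, Matrix.add_mul, Matrix.mul_one]
    congr 1
    · rw [← Matrix.map_mul, hUV, Matrix.map_one _ (map_zero _) (map_one _)]
    · rw [Matrix.mul_smul, Matrix.smul_mul, ← Matrix.map_mul, ← Matrix.map_mul]
  rw [key, Matrix.det_mul, Matrix.det_mul, mul_comm, ← mul_assoc, ← Matrix.det_mul,
    ← Matrix.map_mul, hVU, Matrix.map_one _ (map_zero _) (map_one _), Matrix.det_one, one_mul]

lemma kTraceC_diagonal {n : ℕ} (k : ℕ) (d : Fin n → ℂ) :
    kTraceC k (Matrix.diagonal d)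
      = ∑ S ∈ (Finset.univ : Finset (Fin n)).powersetCard k, ∏ i ∈ S, d i := by
  unfold kTraceC
  apply Finset.sum_congr rfl
  intro S _
  rw [Matrix.submatrix_diagonal d _ Subtype.val_injective, Matrix.det_diagonal]
  exact Finset.prod_coe_sort S d

/-- For a Hermitian matrix, `kTrace` is the elementary symmetric function of eigenvalues. -/
lemma kTrace_eq_esym_eigenvalues {n : ℕ} (k : ℕ) {A : Matrix (Fin n) (Fin n) ℂ}
    (hA : A.IsHermitian) :
    kTrace k A = ∑ S ∈ (Finset.univ : Finset (Fin n)).powersetCard k,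
      ∏ i ∈ S, hA.eigenvalues i := by
  have hU := hA.eigenvectorUnitary.2
  rw [Matrix.mem_unitaryGroup_iff'] at hU
  have hU' := hA.eigenvectorUnitary.2
  rw [Matrix.mem_unitaryGroup_iff] at hU'
  have hdiag : star (hA.eigenvectorUnitary : Matrix (Fin n) (Fin n) ℂ) * A
      * (hA.eigenvectorUnitary : Matrix (Fin n) (Fin n) ℂ)
      = Matrix.diagonal (RCLike.ofReal ∘ hA.eigenvalues) := by
    have h := hA.conjStarAlgAut_star_eigenvectorUnitary
    rwa [Unitary.conjStarAlgAut_star_apply] at h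
  have h1 : kTraceC k A = kTraceC k (Matrix.diagonal (RCLike.ofReal ∘ hA.eigenvalues)) := by
    rw [← hdiag]
    rw [kTraceC_conj k A (star (hA.eigenvectorUnitary : Matrix (Fin n) (Fin n) ℂ))
      (hA.eigenvectorUnitary : Matrix (Fin n) (Fin n) ℂ) hU hU']
  unfold kTrace
  rw [h1, kTraceC_diagonal]
  have h2 : ∑ S ∈ (Finset.univ : Finset (Fin n)).powersetCard k,
      ∏ i ∈ S, (RCLike.ofReal ∘ hA.eigenvalues) i
      = ((∑ S ∈ (Finset.univ : Finset (Fin n)).powersetCard k,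
          ∏ i ∈ S, hA.eigenvalues i : ℝ) : ℂ) := by
    push_cast
    rfl
  rw [h2, Complex.ofReal_re]

lemma diag_real {m : Type*} [Fintype m] {P : Matrix m m ℂ}
    (hP : P.IsHermitian) (i : m) : P i i = ((P i i).re : ℂ) :=
  (Complex.conj_eq_iff_re.1 (hP.apply i i)).symm

lemma diag_re_nonneg {m : Type*} [Fintype m] [DecidableEq m] {P : Matrix m m ℂ}
    (hP : P.PosSemidef) (i : m) : 0 ≤ (P i i).re := by
  have h := hP.dotProduct_mulVec_nonneg (Pi.single i 1)
  have hc : dotProduct (star (Pi.single i 1)) (P *ᵥ Pi.single i 1) = P i i := by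
    rw [Matrix.mulVec_single]
    simp [dotProduct, Pi.single_apply, apply_ite, Finset.sum_ite_eq']
  rw [hc] at h
  rw [Complex.le_def] at h
  simpa using h.1

lemma det_real {m : Type*} [Fintype m] [DecidableEq m] {P : Matrix m m ℂ}
    (hP : P.PosSemidef) : P.det = ((P.det.re : ℝ) : ℂ) ∧ 0 ≤ P.det.re := by
  have hdet := hP.1.det_eq_prod_eigenvalues
  have h2 : P.det = ((∏ i, hP.1.eigenvalues i : ℝ) : ℂ) := by
    rw [hdet]; push_cast; rfl
  constructor
  · rw [h2, Complex.ofReal_re]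
  · rw [h2, Complex.ofReal_re]
    exact Finset.prod_nonneg fun i _ => hP.eigenvalues_nonneg i

/-- Hadamard's inequality for positive semidefinite matrices. -/
lemma det_re_le_prod_diag_re {m : Type*} [Fintype m] [DecidableEq m] {P : Matrix m m ℂ}
    (hP : P.PosSemidef) : P.det.re ≤ ∏ i, (P i i).re := by
  rcases isEmpty_or_nonempty m with hm | hm
  · simp [Matrix.det_isEmpty]
  by_cases h0 : ∀ i, 0 < (P i i).re
  · -- normalize to unit diagonal
    set d : m → ℝ := fun i => (P i i).re with hd
    set sq : m → ℝ := fun i => Real.sqrt (d i) with hsq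
    have hsqpos : ∀ i, 0 < sq i := fun i => Real.sqrt_pos.2 (h0 i)
    set Dm : Matrix m m ℂ := Matrix.diagonal (fun i => (((sq i)⁻¹ : ℝ) : ℂ)) with hDm
    have hDm_herm : Dmᴴ = Dm := by
      rw [hDm, Matrix.diagonal_conjTranspose]
      have hst : (star fun i => (((sq i)⁻¹ : ℝ) : ℂ)) = fun i => (((sq i)⁻¹ : ℝ) : ℂ) := by
        funext i
        simp [Pi.star_apply, Complex.star_def, Complex.conj_ofReal]
      rw [hst]
    have hQ : (Dm * P * Dm).PosSemidef := by
      have h := hP.mul_mul_conjTranspose_same Dm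
      rwa [hDm_herm] at h
    set Q := Dm * P * Dm with hQdef
    have hsqC : ∀ i, ((sq i : ℝ) : ℂ) ≠ 0 := by
      intro i
      simp only [ne_eq, Complex.ofReal_eq_zero]
      exact (hsqpos i).ne'
    have hQdiag : ∀ i, Q i i = 1 := by
      intro i
      have hQii : Q i i = (((sq i)⁻¹ : ℝ) : ℂ) * P i i * (((sq i)⁻¹ : ℝ) : ℂ) := by
        rw [hQdef, Matrix.mul_diagonal, Matrix.diagonal_mul]
      rw [hQii, diag_real hP.1 i]
      have hdd : (P i i).re = sq i * sq i := (Real.mul_self_sqrt (h0 i).le).symm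
      rw [hdd]
      push_cast
      field_simp
      exact div_self (hsqC i)
    set μ := hQ.1.eigenvalues with hμdef
    have hμ0 : ∀ i, 0 ≤ μ i := fun i => hQ.eigenvalues_nonneg i
    have hnn0 : Fintype.card m ≠ 0 := Fintype.card_ne_zero
    have hU1 : star (hQ.1.eigenvectorUnitary : Matrix m m ℂ)
        * (hQ.1.eigenvectorUnitary : Matrix m m ℂ) = 1 := by
      have := (hQ.1.eigenvectorUnitary).2
      rw [Matrix.mem_unitaryGroup_iff'] at this
      exact this
    have htrace : Q.trace = (Fintype.card m : ℂ) := by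
      rw [Matrix.trace]
      have : ∀ i ∈ Finset.univ, Q.diag i = 1 := fun i _ => hQdiag i
      rw [Finset.sum_congr rfl this, Finset.sum_const, Finset.card_univ, nsmul_eq_mul, mul_one]
    have htrace2 : Q.trace = ((∑ i, μ i : ℝ) : ℂ) := by
      conv_lhs => rw [hQ.1.spectral_theorem, Unitary.conjStarAlgAut_apply]
      rw [Matrix.trace_mul_comm, ← Matrix.mul_assoc, hU1, Matrix.one_mul,
        Matrix.trace_diagonal]
      push_cast
      rfl
    have hsum : ∑ i, μ i = (Fintype.card m : ℝ) := by
      have h := htrace.symm.trans htrace2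
      exact_mod_cast h.symm
    have hprodle : ∏ i, μ i ≤ 1 := by
      have hgm := Real.geom_mean_le_arith_mean_weighted Finset.univ
        (fun _ => ((Fintype.card m : ℝ))⁻¹) μ
        (fun _ _ => by positivity)
        (by
          rw [Finset.sum_const, Finset.card_univ, nsmul_eq_mul]
          field_simp)
        (fun i _ => hμ0 i)
      have hrhs : ∑ i, ((Fintype.card m : ℝ))⁻¹ * μ i = 1 := by
        rw [← Finset.mul_sum, hsum]
        field_simp
      rw [hrhs] at hgm
      have hprpow : (∏ i, μ i) ^ ((Fintype.card m : ℝ))⁻¹ ≤ 1 := by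
        rw [← Real.finset_prod_rpow Finset.univ μ (fun i _ => hμ0 i)]
        exact_mod_cast hgm
      calc ∏ i, μ i = ((∏ i, μ i) ^ ((Fintype.card m : ℝ))⁻¹) ^ (Fintype.card m) := by
            rw [Real.rpow_inv_natCast_pow (Finset.prod_nonneg fun i _ => hμ0 i) hnn0]
        _ ≤ 1 := pow_le_one₀ (Real.rpow_nonneg (Finset.prod_nonneg fun i _ => hμ0 i) _) hprpow
    have hdetQ : Q.det = ((∏ i, μ i : ℝ) : ℂ) := by
      rw [hQ.1.det_eq_prod_eigenvalues]
      push_cast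
      rfl
    have hdetDm : Dm.det = ((∏ i, (sq i)⁻¹ : ℝ) : ℂ) := by
      rw [hDm, Matrix.det_diagonal]
      push_cast
      rfl
    have hQP : Q.det = Dm.det * P.det * Dm.det := by
      rw [hQdef, Matrix.det_mul, Matrix.det_mul]
    have h1 : ((∏ i, sq i : ℝ) : ℂ) * Dm.det = 1 := by
      rw [hdetDm, ← Complex.ofReal_mul, ← Finset.prod_mul_distrib]
      have : ∀ i ∈ Finset.univ, sq i * (sq i)⁻¹ = 1 := fun i _ =>
        mul_inv_cancel₀ (hsqpos i).ne'
      rw [Finset.prod_congr rfl this, Finset.prod_const_one, Complex.ofReal_one]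
    have hPdet : P.det = ((∏ i, sq i : ℝ) : ℂ) ^ 2 * Q.det := by
      calc P.det = (((∏ i, sq i : ℝ) : ℂ) * Dm.det) * P.det
            * (((∏ i, sq i : ℝ) : ℂ) * Dm.det) := by rw [h1]; ring
        _ = ((∏ i, sq i : ℝ) : ℂ) ^ 2 * (Dm.det * P.det * Dm.det) := by ring
        _ = ((∏ i, sq i : ℝ) : ℂ) ^ 2 * Q.det := by rw [← hQP]
    have hPre : P.det.re = (∏ i, sq i) ^ 2 * ∏ i, μ i := by
      rw [hPdet, hdetQ, ← Complex.ofReal_pow, ← Complex.ofReal_mul, Complex.ofReal_re]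
    rw [hPre]
    have hfinal : (∏ i, sq i) ^ 2 * ∏ i, μ i ≤ (∏ i, sq i) ^ 2 :=
      mul_le_of_le_one_right (by positivity) hprodle
    calc (∏ i, sq i) ^ 2 * ∏ i, μ i ≤ (∏ i, sq i) ^ 2 := hfinal
      _ = ∏ i, (sq i) ^ 2 := by rw [Finset.prod_pow]
      _ = ∏ i, (P i i).re := by
          apply Finset.prod_congr rfl
          intro i _
          rw [hsq]
          exact Real.sq_sqrt (h0 i).le
  · -- some diagonal entry is zero
    push_neg at h0
    obtain ⟨i, hi⟩ := h0
    have hieq : (P i i).re = 0 := le_antisymm hi (diag_re_nonneg hP i)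
    obtain ⟨B, hB⟩ : ∃ B : Matrix m m ℂ, P = Bᴴ * B := by
      open scoped MatrixOrder in
      exact CStarAlgebra.nonneg_iff_eq_star_mul_self.mp hP.nonneg
    have hcol : ∀ k, B k i = 0 := by
      intro k
      have hPii : P i i = ∑ k, star (B k i) * B k i := by
        rw [hB, Matrix.mul_apply]
        rfl
      have : (P i i).re = ∑ k, Complex.normSq (B k i) := by
        rw [hPii]
        rw [Complex.re_sum]
        apply Finset.sum_congr rfl
        intro k _
        rw [Complex.star_def, mul_comm, Complex.mul_conj, Complex.ofReal_re]
      rw [hieq] at this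
      have hz := (Finset.sum_eq_zero_iff_of_nonneg
        (fun k _ => Complex.normSq_nonneg (B k i))).1 this.symm k (Finset.mem_univ k)
      exact Complex.normSq_eq_zero.1 hz
    have hPcol : ∀ j, P j i = 0 := by
      intro j
      rw [hB, Matrix.mul_apply]
      apply Finset.sum_eq_zero
      intro k _
      rw [Matrix.conjTranspose_apply, hcol k, mul_zero]
    have : P.det = 0 := Matrix.det_eq_zero_of_column_eq_zero i hPcol
    rw [this]
    simp only [Complex.zero_re]
    exact Finset.prod_nonneg fun j _ => diag_re_nonneg hP j

end KTraceAux2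


/-- The map `A ↦ (trace_k[A])^(1/k)` is concave on Hermitian positive semi-definite
matrices. -/
theorem kTrace_rpow_concave {n : ℕ} (hn : 1 ≤ n) (k : ℕ) (hk1 : 1 ≤ k) (hkn : k ≤ n)
    (A B : Matrix (Fin n) (Fin n) ℂ) (hA : A.PosSemidef) (hB : B.PosSemidef)
    (τ : ℝ) (hτ0 : 0 ≤ τ) (hτ1 : τ ≤ 1) :
    τ * (kTrace k A) ^ (1 / (k : ℝ)) + (1 - τ) * (kTrace k B) ^ (1 / (k : ℝ))
      ≤ (kTrace k ((τ : ℂ) • A + ((1 - τ : ℝ) : ℂ) • B)) ^ (1 / (k : ℝ)) := by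
  classical
  have hτ1' : (0:ℝ) ≤ 1 - τ := by linarith
  set C : Matrix (Fin n) (Fin n) ℂ := (τ : ℂ) • A + ((1 - τ : ℝ) : ℂ) • B with hCdef
  have key0 : ∀ (c : ℝ) (z : ℂ), 0 ≤ c → 0 ≤ z → 0 ≤ (c : ℂ) * z := by
    intro c z hc hz
    rw [Complex.le_def] at hz ⊢
    constructor
    · rw [Complex.re_ofReal_mul, Complex.zero_re] at *
      exact mul_nonneg hc hz.1
    · rw [Complex.im_ofReal_mul, Complex.zero_im] at *
      rw [← hz.2]
      ring
  have hC : C.PosSemidef := by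
    refine Matrix.PosSemidef.of_dotProduct_mulVec_nonneg ?_ ?_
    · show Cᴴ = C
      simp [hCdef, Matrix.conjTranspose_add, Matrix.conjTranspose_smul, hA.1.eq, hB.1.eq,
        Complex.conj_ofReal]
    · intro x
      rw [hCdef, Matrix.add_mulVec, dotProduct_add,
        Matrix.smul_mulVec, Matrix.smul_mulVec,
        dotProduct_smul, dotProduct_smul,
        smul_eq_mul, smul_eq_mul]
      exact add_nonneg (key0 τ _ hτ0 (hA.dotProduct_mulVec_nonneg x)) (key0 (1 - τ) _ hτ1' (hB.dotProduct_mulVec_nonneg x))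
  have hCH := hC.1
  set u : Matrix (Fin n) (Fin n) ℂ := (hCH.eigenvectorUnitary : Matrix (Fin n) (Fin n) ℂ)
    with hu
  have hU : star u * u = 1 := by
    have h := hCH.eigenvectorUnitary.2
    rw [Matrix.mem_unitaryGroup_iff'] at h
    exact h
  have hU' : u * star u = 1 := by
    have h := hCH.eigenvectorUnitary.2
    rw [Matrix.mem_unitaryGroup_iff] at h
    exact h
  have hA'psd : (star u * A * u).PosSemidef := by
    rw [Matrix.star_eq_conjTranspose]
    exact hA.conjTranspose_mul_mul_same u
  have hB'psd : (star u * B * u).PosSemidef := by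
    rw [Matrix.star_eq_conjTranspose]
    exact hB.conjTranspose_mul_mul_same u
  have hdiagC : star u * C * u = Matrix.diagonal (RCLike.ofReal ∘ hCH.eigenvalues) := by
    have h := hCH.conjStarAlgAut_star_eigenvectorUnitary
    rwa [Unitary.conjStarAlgAut_star_apply] at h
  have hsplit : star u * C * u
      = (τ : ℂ) • (star u * A * u) + ((1 - τ : ℝ) : ℂ) • (star u * B * u) := by
    rw [hCdef, Matrix.mul_add, Matrix.add_mul, Matrix.mul_smul, Matrix.smul_mul,
      Matrix.mul_smul, Matrix.smul_mul]
  set lam := hCH.eigenvalues with hlam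
  set a : Fin n → ℝ := fun i => ((star u * A * u) i i).re with hadef
  set b : Fin n → ℝ := fun i => ((star u * B * u) i i).re with hbdef
  have hlam_eq : ∀ i, lam i = τ * a i + (1 - τ) * b i := by
    intro i
    have h := congrFun (congrFun (hdiagC.symm.trans hsplit) i) i
    rw [Matrix.diagonal_apply_eq] at h
    have h2 : ((τ:ℂ) • (star u * A * u) + ((1 - τ:ℝ):ℂ) • (star u * B * u)) i i
        = (τ:ℂ) * (star u * A * u) i i + ((1 - τ:ℝ):ℂ) * (star u * B * u) i i := by
      simp [Matrix.add_apply, Matrix.smul_apply, smul_eq_mul]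
    rw [h2] at h
    have h3 := congrArg Complex.re h
    simpa [Complex.re_ofReal_mul, hadef, hbdef] using h3
  -- Hadamard step: for PSD M, 0 ≤ kTrace k M ≤ esym of the diagonal
  have hadamard : ∀ (M : Matrix (Fin n) (Fin n) ℂ), M.PosSemidef →
      0 ≤ kTrace k M ∧ kTrace k M ≤ KTraceAux.esym Finset.univ k (fun i => (M i i).re) := by
    intro M hM
    have hre : kTrace k M = ∑ S ∈ (Finset.univ : Finset (Fin n)).powersetCard k,
        ((M.submatrix (fun i : {x // x ∈ S} => (i : Fin n))
          (fun j : {x // x ∈ S} => (j : Fin n))).det).re := by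
      unfold kTrace kTraceC
      rw [Complex.re_sum]
    constructor
    · rw [hre]
      apply Finset.sum_nonneg
      intro S _
      exact (KTraceAux2.det_real (hM.submatrix _)).2
    · rw [hre]
      unfold KTraceAux.esym
      apply Finset.sum_le_sum
      intro S _
      have h1 := KTraceAux2.det_re_le_prod_diag_re
        (hM.submatrix (fun i : {x // x ∈ S} => (i : Fin n)))
      calc ((M.submatrix (fun i : {x // x ∈ S} => (i : Fin n))
              (fun j : {x // x ∈ S} => (j : Fin n))).det).re
          ≤ ∏ j : {x // x ∈ S}, ((M.submatrix (fun i : {x // x ∈ S} => (i : Fin n))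
              (fun j : {x // x ∈ S} => (j : Fin n))) j j).re := h1
        _ = ∏ i ∈ S, (M i i).re := Finset.prod_coe_sort S (fun i => (M i i).re)
  have hinvA : kTrace k A = kTrace k (star u * A * u) := by
    unfold kTrace
    rw [KTraceAux2.kTraceC_conj k A (star u) u hU hU']
  have hinvB : kTrace k B = kTrace k (star u * B * u) := by
    unfold kTrace
    rw [KTraceAux2.kTraceC_conj k B (star u) u hU hU']
  have hkC : kTrace k C = KTraceAux.esym Finset.univ k lam := by
    rw [KTraceAux2.kTrace_eq_esym_eigenvalues k hCH]
    rfl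
  have hcard : k ≤ (Finset.univ : Finset (Fin n)).card := by
    rw [Finset.card_univ, Fintype.card_fin]
    exact hkn
  have ha0 : ∀ i ∈ (Finset.univ : Finset (Fin n)), 0 ≤ a i :=
    fun i _ => KTraceAux2.diag_re_nonneg hA'psd i
  have hb0 : ∀ i ∈ (Finset.univ : Finset (Fin n)), 0 ≤ b i :=
    fun i _ => KTraceAux2.diag_re_nonneg hB'psd i
  have hvec := KTraceAux.esym_rpow_concave hk1 hcard ha0 hb0 hτ0 hτ1
  have hpow : (0:ℝ) ≤ 1 / (k : ℝ) := by positivity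
  have hA_le : kTrace k A ≤ KTraceAux.esym Finset.univ k a := by
    rw [hinvA]
    exact (hadamard _ hA'psd).2
  have hA_0 : 0 ≤ kTrace k A := by
    rw [hinvA]
    exact (hadamard _ hA'psd).1
  have hB_le : kTrace k B ≤ KTraceAux.esym Finset.univ k b := by
    rw [hinvB]
    exact (hadamard _ hB'psd).2
  have hB_0 : 0 ≤ kTrace k B := by
    rw [hinvB]
    exact (hadamard _ hB'psd).1
  have hlamfun : lam = fun i => τ * a i + (1 - τ) * b i := funext hlam_eq
  calc τ * (kTrace k A) ^ (1 / (k:ℝ)) + (1 - τ) * (kTrace k B) ^ (1 / (k:ℝ))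
      ≤ τ * (KTraceAux.esym Finset.univ k a) ^ (1 / (k:ℝ))
        + (1 - τ) * (KTraceAux.esym Finset.univ k b) ^ (1 / (k:ℝ)) := by
        apply add_le_add
        · exact mul_le_mul_of_nonneg_left (Real.rpow_le_rpow hA_0 hA_le hpow) hτ0
        · exact mul_le_mul_of_nonneg_left (Real.rpow_le_rpow hB_0 hB_le hpow) hτ1'
    _ ≤ (KTraceAux.esym Finset.univ k (fun i => τ * a i + (1 - τ) * b i)) ^ (1 / (k:ℝ)) :=
        hvec
    _ = (kTrace k C) ^ (1 / (k:ℝ)) := by rw [hkC, hlamfun]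
end

section
/- Let n ≥ 1 and 1 ≤ k ≤ n. For any n×n complex matrix A, the mixed discriminant of k copies of A and n−k copies of the identity matrix I_n satisfies D(A,…,A [k copies], I_n,…,I_n [n−k copies]) = trace_k[A] / C(n,k), where C(n,k) is the binomial coefficient. -/
open Matrix MeasureTheory Finset ProbabilityTheory
open scoped Classical ComplexOrder

noncomputable section

/-- The mixed discriminant of `n` matrices `A 0, …, A (n-1)`:
`D(A₁,…,Aₙ) = (1/n!) Σ_{σ ∈ Sₙ} det M^σ`, where the `j`-th column of `M^σ`
is the `j`-th column of `A (σ j)`. -/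
def mixedDisc {n : ℕ} (A : Fin n → Matrix (Fin n) (Fin n) ℂ) : ℂ :=
  (n.factorial : ℂ)⁻¹ * ∑ σ : Equiv.Perm (Fin n), (Matrix.of fun i j => A (σ j) i j).det

/-- The real value of the mixed discriminant (real for Hermitian arguments). -/
def mixedDiscR {n : ℕ} (A : Fin n → Matrix (Fin n) (Fin n) ℂ) : ℝ := (mixedDisc A).re

end

noncomputable section MixedDiscAux

noncomputable section
variable {n : ℕ}

def gdet (A : Matrix (Fin n) (Fin n) ℂ) (s : Finset (Fin n)) : ℂ :=
  (A.submatrix (fun i : {x // x ∈ s} => (i : Fin n)) (fun j : {x // x ∈ s} => (j : Fin n))).det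

lemma det_mask (A : Matrix (Fin n) (Fin n) ℂ) (p : Fin n → Prop) [DecidablePred p] :
    (Matrix.of fun i j => if p j then A i j else (1 : Matrix (Fin n) (Fin n) ℂ) i j).det
      = (A.submatrix (fun i : {x // p x} => (i : Fin n)) (fun j : {x // p x} => (j : Fin n))).det := by
  rw [← Matrix.det_submatrix_equiv_self (Equiv.sumCompl p)]
  have h : ((Matrix.of fun i j => if p j then A i j else (1 : Matrix (Fin n) (Fin n) ℂ) i j).submatrix
      (Equiv.sumCompl p) (Equiv.sumCompl p))
      = Matrix.fromBlocks
          (A.submatrix (fun i : {x // p x} => (i : Fin n)) (fun j : {x // p x} => (j : Fin n)))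
          0
          (A.submatrix (fun i : {x // ¬ p x} => (i : Fin n)) (fun j : {x // p x} => (j : Fin n)))
          1 := by
    ext i j
    cases i with
    | inl i =>
      cases j with
      | inl j => simp [j.2]
      | inr j =>
        have hne : (i : Fin n) ≠ (j : Fin n) := fun h => j.2 (h ▸ i.2)
        simp [j.2, Matrix.one_apply, hne]
    | inr i =>
      cases j with
      | inl j => simp [j.2]
      | inr j =>
        simp [j.2, Matrix.one_apply, Subtype.ext_iff]
  rw [h, Matrix.det_fromBlocks_zero₁₂, Matrix.det_one, mul_one]

lemma det_mask' (A : Matrix (Fin n) (Fin n) ℂ) (p : Fin n → Prop) [DecidablePred p] :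
    (Matrix.of fun i j => if p j then A i j else (1 : Matrix (Fin n) (Fin n) ℂ) i j).det
      = gdet A (Finset.univ.filter p) := by
  rw [det_mask]
  rw [gdet, ← Matrix.det_submatrix_equiv_self
    (Equiv.subtypeEquivRight (fun x => by simp) :
      {x // x ∈ Finset.univ.filter p} ≃ {x // p x})]
  rfl
end

lemma fiber_card_eq {n : ℕ} (k : ℕ) (S S' : Finset (Fin n)) (h : S.card = S'.card) :
    (Finset.univ.filter fun σ : Equiv.Perm (Fin n) =>
        (Finset.univ.filter fun j => ((σ j : Fin n) : ℕ) < k) = S).card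
    = (Finset.univ.filter fun σ : Equiv.Perm (Fin n) =>
        (Finset.univ.filter fun j => ((σ j : Fin n) : ℕ) < k) = S').card := by
  have hc : (Sᶜ).card = (S'ᶜ).card := by simp [Finset.card_compl, h]
  let e1 : {x // x ∈ S} ≃ {x // x ∈ S'} := Finset.equivOfCardEq h
  let e2 : {x // x ∈ Sᶜ} ≃ {x // x ∈ S'ᶜ} := Finset.equivOfCardEq hc
  let a : {x : Fin n // ¬ x ∈ S} ≃ {x // x ∈ Sᶜ} :=
    Equiv.subtypeEquivRight (fun x => by simp)
  let a' : {x : Fin n // ¬ x ∈ S'} ≃ {x // x ∈ S'ᶜ} :=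
    Equiv.subtypeEquivRight (fun x => by simp)
  let τ : Equiv.Perm (Fin n) :=
    ((Equiv.sumCompl (· ∈ S)).symm.trans ((e1.sumCongr ((a.trans e2).trans a'.symm)).trans
      (Equiv.sumCompl (· ∈ S'))))
  have hτ : ∀ x, x ∈ S ↔ τ x ∈ S' := by
    intro x
    by_cases hx : x ∈ S
    · have hτx : τ x = ↑(e1 ⟨x, hx⟩) := by
        simp [τ, Equiv.sumCompl_symm_apply_of_pos (p := fun x => x ∈ S) hx]
      simp [hx, hτx, (e1 ⟨x, hx⟩).2]
    · have hτx : τ x = ↑((a.trans e2).trans a'.symm ⟨x, hx⟩) := by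
        simp [τ, Equiv.sumCompl_symm_apply_of_neg (p := fun x => x ∈ S) hx]
      have : τ x ∉ S' := by
        rw [hτx]
        exact ((a.trans e2).trans a'.symm ⟨x, hx⟩).2
      simp [hx, this]
  have key : ∀ (T T' : Finset (Fin n)) (ρ : Equiv.Perm (Fin n)), (∀ x, x ∈ T ↔ ρ x ∈ T') →
      ∀ σ ∈ (Finset.univ.filter fun σ : Equiv.Perm (Fin n) =>
          (Finset.univ.filter fun j => ((σ j : Fin n) : ℕ) < k) = T),
        (Finset.univ.filter fun j => (((σ * ρ⁻¹) j : Fin n) : ℕ) < k) = T' := by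
    intro T T' ρ hρ σ hσ
    simp only [Finset.mem_filter, Finset.mem_univ, true_and] at hσ
    ext j
    simp only [Finset.mem_filter, Finset.mem_univ, true_and]
    simp only [Equiv.Perm.mul_apply]
    have h1 : ((σ (ρ⁻¹ j) : Fin n) : ℕ) < k ↔ ρ⁻¹ j ∈ T := by
      rw [← hσ]; simp
    rw [h1, hρ (ρ⁻¹ j)]
    simp
  have hτ' : ∀ x, x ∈ S' ↔ τ⁻¹ x ∈ S := by
    intro x
    rw [hτ (τ⁻¹ x)]
    simp
  refine Finset.card_bij' (fun σ _ => σ * τ⁻¹) (fun σ _ => σ * τ) ?_ ?_ ?_ ?_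
  · intro σ hσ
    simp only [Finset.mem_filter, Finset.mem_univ, true_and]
    exact key S S' τ hτ σ hσ
  · intro σ hσ
    simp only [Finset.mem_filter, Finset.mem_univ, true_and]
    have := key S' S τ⁻¹ (fun x => hτ' x) σ hσ
    rw [inv_inv] at this
    exact this
  · intro σ _; group
  · intro σ _; group


end MixedDiscAux

/-- The mixed discriminant of `k` copies of `A` and `n - k` copies of the identity equals
`trace_k[A] / C(n,k)`. -/
theorem mixedDisc_self_identity {n : ℕ} (hn : 1 ≤ n) (k : ℕ) (hk1 : 1 ≤ k) (hkn : k ≤ n)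
    (A : Matrix (Fin n) (Fin n) ℂ) :
    mixedDisc (fun i => if (i : ℕ) < k then A else 1) = kTraceC k A / (n.choose k : ℂ) := by
  classical
  set P := (Finset.univ : Finset (Fin n)).powersetCard k with hP
  set f : Equiv.Perm (Fin n) → Finset (Fin n) :=
    fun σ => Finset.univ.filter (fun j => ((σ j : Fin n) : ℕ) < k) with hf
  -- each f σ has cardinality k
  have hK : (Finset.univ.filter fun i : Fin n => (i : ℕ) < k).card = k := by
    have heq : (Finset.univ.filter fun i : Fin n => (i : ℕ) < k)
        = Finset.map ⟨Fin.castLE hkn, Fin.castLE_injective hkn⟩ Finset.univ := by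
      ext i
      simp only [Finset.mem_filter, Finset.mem_univ, true_and, Finset.mem_map,
        Function.Embedding.coeFn_mk]
      constructor
      · intro h; exact ⟨⟨(i : ℕ), h⟩, by ext; simp⟩
      · rintro ⟨b, rfl⟩; simpa using b.2
    rw [heq, Finset.card_map, Finset.card_univ, Fintype.card_fin]
  have hmaps : ∀ σ : Equiv.Perm (Fin n), f σ ∈ P := by
    intro σ
    rw [hP, Finset.mem_powersetCard]
    refine ⟨Finset.subset_univ _, ?_⟩
    rw [← hK]
    refine Finset.card_bij' (fun j _ => σ j) (fun j _ => σ.symm j) ?_ ?_ ?_ ?_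
    · intro j hj; simp only [hf, Finset.mem_filter, Finset.mem_univ, true_and] at hj ⊢; exact hj
    · intro j hj; simp only [hf, Finset.mem_filter, Finset.mem_univ, true_and] at hj ⊢; simpa
    · intro j _; simp
    · intro j _; simp
  -- rewrite the determinant as gdet of the fiber
  have hdet : ∀ σ : Equiv.Perm (Fin n),
      (Matrix.of fun i j => (fun i : Fin n => if (i : ℕ) < k then A else 1) (σ j) i j).det
        = gdet A (f σ) := by
    intro σ
    have := det_mask' A (fun j : Fin n => ((σ j : Fin n) : ℕ) < k)
    rw [← this]
    congr 1
    ext i j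
    simp only [Matrix.of_apply]
    by_cases h : ((σ j : Fin n) : ℕ) < k <;> simp [h]
  rw [mixedDisc]
  have hsum : ∑ σ : Equiv.Perm (Fin n),
      (Matrix.of fun i j => (fun i : Fin n => if (i : ℕ) < k then A else 1) (σ j) i j).det
      = ∑ S ∈ P, ((Finset.univ.filter fun σ : Equiv.Perm (Fin n) => f σ = S).card : ℂ) * gdet A S := by
    rw [← Finset.sum_fiberwise_of_maps_to (fun σ _ => hmaps σ)
      (fun σ => (Matrix.of fun i j => (fun i : Fin n => if (i : ℕ) < k then A else 1) (σ j) i j).det)]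
    refine Finset.sum_congr rfl ?_
    intro S _
    rw [Finset.sum_congr rfl (fun σ hσ => by
      rw [hdet σ, (Finset.mem_filter.mp hσ).2])]
    rw [Finset.sum_const, nsmul_eq_mul]
  -- all fibers have the same cardinality
  obtain ⟨S₀, hS₀sub, hS₀card⟩ := Finset.exists_subset_card_eq (show k ≤ (Finset.univ : Finset (Fin n)).card by simpa)
  have hS₀ : S₀ ∈ P := by rw [hP, Finset.mem_powersetCard]; exact ⟨hS₀sub, hS₀card⟩
  set c := (Finset.univ.filter fun σ : Equiv.Perm (Fin n) => f σ = S₀).card with hc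
  have hfib : ∀ S ∈ P, (Finset.univ.filter fun σ : Equiv.Perm (Fin n) => f σ = S).card = c := by
    intro S hS
    rw [hP, Finset.mem_powersetCard] at hS
    exact fiber_card_eq k S S₀ (by rw [hS.2, hS₀card])
  -- counting: n! = choose * c
  have hcount : Nat.factorial n = n.choose k * c := by
    have h1 : (Finset.univ : Finset (Equiv.Perm (Fin n))).card
        = ∑ S ∈ P, (Finset.univ.filter fun σ : Equiv.Perm (Fin n) => f σ = S).card :=
      Finset.card_eq_sum_card_fiberwise (fun σ _ => hmaps σ)
    rw [Finset.sum_congr rfl hfib, Finset.sum_const, smul_eq_mul] at h1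
    have h2 : (Finset.univ : Finset (Equiv.Perm (Fin n))).card = Nat.factorial n := by
      simp [Finset.card_univ, Fintype.card_perm]
    have h3 : P.card = n.choose k := by
      rw [hP, Finset.card_powersetCard, Finset.card_univ, Fintype.card_fin]
    rw [h2, h3] at h1
    exact h1
  rw [hsum, Finset.sum_congr rfl (fun S hS => by rw [hfib S hS]), ← Finset.mul_sum]
  have hT : ∑ S ∈ P, gdet A S = kTraceC k A := rfl
  rw [hT]
  have hchoose : (n.choose k : ℂ) ≠ 0 := by
    exact_mod_cast (Nat.choose_pos hkn).ne'
  have hfact : ((Nat.factorial n : ℕ) : ℂ) ≠ 0 := by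
    exact_mod_cast Nat.factorial_ne_zero n
  have hcC : ((Nat.factorial n : ℕ) : ℂ) = (n.choose k : ℂ) * (c : ℂ) := by
    exact_mod_cast congrArg (Nat.cast : ℕ → ℂ) hcount
  have hcne : (c : ℂ) ≠ 0 := by
    intro h
    rw [h, mul_zero] at hcC
    exact hfact hcC
  field_simp [hcC]
  rw [hcC]
  ring
end

section
/- Let n ≥ 1, s > 0, and let f : (0,+∞)^n → (0,+∞) be homogeneous of order s, i.e., f(λx) = λ^s f(x) for all λ > 0 and x ∈ (0,+∞)^n. Then x ↦ f(x)^(1/s) is concave on (0,+∞)^n if and only if x ↦ ln f(x) is concave on (0,+∞)^n. -/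
open Matrix MeasureTheory Finset ProbabilityTheory
open scoped Classical ComplexOrder

private lemma concaveOn_congr_aux {E : Type*} [AddCommMonoid E] [Module ℝ E]
    {S : Set E} (hS : Convex ℝ S) {f g : E → ℝ} (h : ∀ x ∈ S, f x = g x)
    (hf : ConcaveOn ℝ S f) : ConcaveOn ℝ S g := by
  refine ⟨hS, fun x hx y hy a b ha hb hab => ?_⟩
  rw [← h _ (hS hx hy ha hb hab), ← h _ hx, ← h _ hy]
  exact hf.2 hx hy ha hb hab

/-- For a positive function `f` on the positive orthant that is homogeneous of order
`s > 0`, `x ↦ f(x)^(1/s)` is concave if and only if `x ↦ ln f(x)` is concave. -/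
theorem homogeneous_rpow_concave_iff_log_concave {n : ℕ} (hn : 1 ≤ n) (s : ℝ) (hs : 0 < s)
    (f : (Fin n → ℝ) → ℝ)
    (hpos : ∀ x : Fin n → ℝ, (∀ i, 0 < x i) → 0 < f x)
    (hhom : ∀ lam : ℝ, 0 < lam → ∀ x : Fin n → ℝ, (∀ i, 0 < x i) →
      f (lam • x) = lam ^ s * f x) :
    ConcaveOn ℝ {x : Fin n → ℝ | ∀ i, 0 < x i} (fun x => f x ^ (1 / s)) ↔
      ConcaveOn ℝ {x : Fin n → ℝ | ∀ i, 0 < x i} (fun x => Real.log (f x)) := by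
  set S : Set (Fin n → ℝ) := {x : Fin n → ℝ | ∀ i, 0 < x i} with hSdef
  set g : (Fin n → ℝ) → ℝ := fun x => f x ^ (1 / s) with hgdef
  have hSconv : Convex ℝ S := by
    have : S = Set.pi Set.univ (fun _ : Fin n => Set.Ioi (0 : ℝ)) := by
      ext x; simp [hSdef, Set.mem_pi]
    rw [this]
    exact convex_pi fun _ _ => convex_Ioi 0
  have hgpos : ∀ x ∈ S, 0 < g x := fun x hx => Real.rpow_pos_of_pos (hpos x hx) _
  have hghom : ∀ lam : ℝ, 0 < lam → ∀ x ∈ S, g (lam • x) = lam * g x := by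
    intro lam hlam x hx
    simp only [hgdef]
    rw [hhom lam hlam x hx, Real.mul_rpow (by positivity) (hpos x hx).le,
      ← Real.rpow_mul hlam.le, mul_one_div, div_self hs.ne', Real.rpow_one]
  have hlogf : ∀ x ∈ S, Real.log (f x) = s * Real.log (g x) := by
    intro x hx
    simp only [hgdef]
    rw [Real.log_rpow (hpos x hx)]
    field_simp
  constructor
  · -- easy direction: g concave ⇒ log f concave
    intro hcg
    have hlogg : ConcaveOn ℝ S (fun x => Real.log (g x)) := by
      refine ⟨hSconv, fun x hx y hy a b ha hb hab => ?_⟩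
      have h1 : a • Real.log (g x) + b • Real.log (g y) ≤
          Real.log (a • g x + b • g y) :=
        (StrictConcaveOn.concaveOn strictConcaveOn_log_Ioi).2 (hgpos x hx) (hgpos y hy) ha hb hab
      have hpos2 : 0 < a • g x + b • g y := by
        rcases ha.eq_or_lt with h | h
        · simp only [← h, zero_add] at hab ⊢
          simpa [hab] using hgpos y hy
        · have := mul_nonneg hb (hgpos y hy).le
          have := mul_pos h (hgpos x hx)
          simp only [smul_eq_mul]; linarith
      have h2 : a • g x + b • g y ≤ g (a • x + b • y) := hcg.2 hx hy ha hb hab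
      exact h1.trans (Real.log_le_log hpos2 h2)
    have := hlogg.smul hs.le
    exact concaveOn_congr_aux hSconv (fun x hx => (hlogf x hx).symm) this
  · -- hard direction: log f concave ⇒ g concave
    intro hlf
    have hlogg : ConcaveOn ℝ S (fun x => Real.log (g x)) := by
      have := hlf.smul (le_of_lt (by positivity : (0:ℝ) < 1 / s))
      refine concaveOn_congr_aux hSconv (fun x hx => ?_) this
      rw [hlogf x hx]; simp only [smul_eq_mul]; field_simp
    refine ⟨hSconv, fun x hx y hy a b ha hb hab => ?_⟩
    rcases ha.eq_or_lt with h | ha'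
    · simp only [← h, zero_add, zero_smul] at hab ⊢
      simp [hab]
    rcases hb.eq_or_lt with h | hb'
    · simp only [← h, add_zero, zero_smul] at hab ⊢
      simp [hab]
    have hA := hgpos x hx
    have hB := hgpos y hy
    set A := g x
    set B := g y
    set c : ℝ := a * A + b * B with hcdef
    have hc : 0 < c := by positivity
    have hx' : A⁻¹ • x ∈ S := fun i => by
      have := hx i
      simp only [Pi.smul_apply, smul_eq_mul]
      positivity
    have hy' : B⁻¹ • y ∈ S := fun i => by
      have := hy i
      simp only [Pi.smul_apply, smul_eq_mul]
      positivity
    have hgx' : g (A⁻¹ • x) = 1 := by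
      rw [hghom A⁻¹ (by positivity) x hx, inv_mul_cancel₀ hA.ne']
    have hgy' : g (B⁻¹ • y) = 1 := by
      rw [hghom B⁻¹ (by positivity) y hy, inv_mul_cancel₀ hB.ne']
    have hmem : a • x + b • y ∈ S := hSconv hx hy ha hb hab
    have hcombo : (a * A / c) • (A⁻¹ • x) + (b * B / c) • (B⁻¹ • y)
        = c⁻¹ • (a • x + b • y) := by
      rw [smul_smul, smul_smul, smul_add, smul_smul, smul_smul]
      congr 1 <;> congr 1 <;> field_simp <;> ring
    have hμ : (0:ℝ) ≤ a * A / c := by positivity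
    have hν : (0:ℝ) ≤ b * B / c := by positivity
    have hsum : a * A / c + b * B / c = 1 := by
      rw [← add_div, hcdef, div_self hc.ne']
    have hkey := hlogg.2 hx' hy' hμ hν hsum
    rw [hcombo] at hkey
    simp only [hgx', hgy', hghom c⁻¹ (by positivity) _ hmem, Real.log_one,
      smul_eq_mul, mul_zero, add_zero] at hkey
    have hGpos : 0 < g (a • x + b • y) := hgpos _ hmem
    have h1 : (1:ℝ) ≤ c⁻¹ * g (a • x + b • y) := by
      have := Real.exp_log (by positivity : (0:ℝ) < c⁻¹ * g (a • x + b • y))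
      calc (1:ℝ) = Real.exp 0 := Real.exp_zero.symm
        _ ≤ Real.exp (Real.log (c⁻¹ * g (a • x + b • y))) := Real.exp_le_exp.2 hkey
        _ = c⁻¹ * g (a • x + b • y) := this
    have : c ≤ g (a • x + b • y) := by
      rw [← one_mul c]
      calc 1 * c ≤ (c⁻¹ * g (a • x + b • y)) * c :=
        mul_le_mul_of_nonneg_right h1 hc.le
        _ = g (a • x + b • y) := by field_simp
    simpa [hcdef, smul_eq_mul] using this
end
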